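/- For integers k ≥ 1 and 1 ≤ s ≤ k, the coefficient of x^(2k) in g(x)^s · h(x)^(2k+1) equals (1/(4^s · 3^k)) · (3^k + (−1)^(k−s) Σ_{i=0}^{s−1} binom(k−s+i, i) · 3^(s−1−i) · 4^i), where h(x) = x/tanh x and g(x) = tanh²x/(3 + tanh²x). -/

import Mathlib

/-- The formal power series of `tanh x` over `ℚ`. -/
noncomputable def tanhPS : PowerSeries ℚ :=
  PowerSeries.mk fun n =>
    if Odd n then
      2 ^ (n + 1) * (2 ^ (n + 1) - 1) * bernoulli (n + 1) / (Nat.factorial (n + 1))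
    else 0

/-- The formal power series `h(x) = x / tanh x = Σ_{n even} 2^n β_n x^n / n!` over `ℚ`. -/
noncomputable def hPS : PowerSeries ℚ :=
  PowerSeries.mk fun n =>
    if Even n then 2 ^ n * bernoulli n / (Nat.factorial n) else 0

section Aux
open PowerSeries
noncomputable def EE : PowerSeries ℚ := rescale 2 (exp ℚ)

lemma hPS_eq : hPS = rescale 2 (bernoulliPowerSeries ℚ) + PowerSeries.X := by
  ext n
  simp only [hPS, coeff_mk, map_add, coeff_rescale, bernoulliPowerSeries, coeff_mk, coeff_X,
    Algebra.algebraMap_self, RingHom.id_apply]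
  rcases n with _ | _ | n
  · norm_num
  · norm_num [bernoulli_one]
  · rw [if_neg (by omega : ¬ n + 1 + 1 = 1)]
    by_cases h : Even (n+2)
    · rw [if_pos h]; push_cast; ring
    · rw [if_neg h, bernoulli_eq_bernoulli'_of_ne_one (by omega),
        bernoulli'_eq_zero_of_odd (Nat.not_even_iff_odd.1 h) (by omega)]
      simp

lemma hE : hPS * (EE - 1) = PowerSeries.X * (EE + 1) := by
  have h2 : rescale (2:ℚ) (bernoulliPowerSeries ℚ * (exp ℚ - 1)) = rescale 2 PowerSeries.X := by
    rw [bernoulliPowerSeries_mul_exp_sub_one]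
  rw [map_mul, map_sub, map_one, rescale_X] at h2
  have hC : (PowerSeries.C (R := ℚ)) 2 = (2 : PowerSeries ℚ) := by
    simp [PowerSeries.C_eq_algebraMap, map_ofNat]
  rw [hPS_eq, EE]
  rw [hC] at h2
  linear_combination h2

lemma XT : PowerSeries.X * tanhPS = rescale 2 hPS - hPS := by
  ext n
  simp only [map_sub, coeff_rescale, hPS, tanhPS, coeff_mk]
  rcases n with _ | n
  · simp
  · rw [PowerSeries.coeff_succ_X_mul, coeff_mk]
    by_cases h : Odd n
    · rw [if_pos h, if_pos (Nat.even_add_one.2 (Nat.not_even_iff_odd.2 h))]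
      push_cast
      ring
    · rw [if_neg h, if_neg (by simpa [Nat.even_add_one] using Nat.not_odd_iff_even.1 h)]
      ring

lemma coeff_EE (n : ℕ) : PowerSeries.coeff (R := ℚ) n EE = 2^n / n.factorial := by
  simp [EE, coeff_rescale, PowerSeries.coeff_exp, div_eq_mul_inv]

lemma X_ne : (PowerSeries.X : PowerSeries ℚ) ≠ 0 := PowerSeries.X_ne_zero

lemma EEsub_ne : EE - 1 ≠ 0 := by
  intro h
  have := congrArg (PowerSeries.coeff (R := ℚ) 1) h
  simp [coeff_EE] at this

lemma EEadd_ne : EE + 1 ≠ 0 := by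
  intro h
  have h0 := congrArg (PowerSeries.coeff (R := ℚ) 0) h
  rw [map_add, coeff_EE] at h0
  norm_num at h0

lemma E2 : rescale (2:ℚ) EE = EE * EE := by
  rw [EE, rescale_rescale, PowerSeries.exp_mul_exp_eq_exp_add]
  norm_num

lemma TE : tanhPS * (EE + 1) = EE - 1 := by
  have r2hE : rescale (2:ℚ) hPS * (EE * EE - 1) = 2 * PowerSeries.X * (EE * EE + 1) := by
    have h2 : rescale (2:ℚ) (hPS * (EE - 1)) = rescale 2 (PowerSeries.X * (EE + 1)) := by
      rw [hE]
    rw [map_mul, map_mul, map_sub, map_add, map_one, rescale_X, E2] at h2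
    have hC : (PowerSeries.C (R := ℚ)) 2 = (2 : PowerSeries ℚ) := by
      simp [PowerSeries.C_eq_algebraMap, map_ofNat]
    rw [hC] at h2
    linear_combination h2
  have key : PowerSeries.X * (tanhPS * ((EE+1) * (EE - 1))) = PowerSeries.X * ((EE-1)*(EE-1)) := by
    linear_combination (EE*EE - 1) * XT + r2hE - (EE + 1) * hE
  have key2 := mul_left_cancel₀ X_ne key
  have key3 : (tanhPS * (EE+1)) * (EE - 1) = (EE - 1) * (EE - 1) := by
    linear_combination key2
  exact mul_right_cancel₀ EEsub_ne key3

lemma hT : hPS * tanhPS = PowerSeries.X := by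
  have : (hPS * tanhPS) * (EE + 1) = PowerSeries.X * (EE + 1) := by
    linear_combination hPS * TE + hE
  exact mul_right_cancel₀ EEadd_ne this

lemma dE : (PowerSeries.derivative ℚ) EE = 2 * EE := by
  ext n
  rw [PowerSeries.coeff_derivative,
    show (2 : PowerSeries ℚ) * EE = PowerSeries.C (R := ℚ) 2 * EE by
      rw [show (PowerSeries.C (R := ℚ)) 2 = (2 : PowerSeries ℚ) by simp [PowerSeries.C_eq_algebraMap, map_ofNat]],
    PowerSeries.coeff_C_mul, coeff_EE, coeff_EE, Nat.factorial_succ]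
  have h1 : ((n:ℚ)+1) ≠ 0 := by positivity
  have h2 : ((n.factorial:ℚ)) ≠ 0 := Nat.cast_ne_zero.2 n.factorial_ne_zero
  field_simp
  push_cast
  ring

lemma dT : (PowerSeries.derivative ℚ) tanhPS = 1 - tanhPS^2 := by
  have hd : (PowerSeries.derivative ℚ) (tanhPS * (EE + 1)) = (PowerSeries.derivative ℚ) (EE - 1) := by rw [TE]
  rw [Derivation.leibniz, map_add, map_sub, dE, Derivation.map_one_eq_zero] at hd
  have hd' : tanhPS * (2 * EE) + (EE + 1) * ((PowerSeries.derivative ℚ) tanhPS) = 2 * EE := by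
    simpa [smul_eq_mul, mul_comm] using hd
  have key : ((PowerSeries.derivative ℚ) tanhPS) * ((EE+1)*(EE+1)) = (1 - tanhPS^2) * ((EE+1)*(EE+1)) := by
    linear_combination (EE+1) * hd' + (tanhPS*(EE+1) - (EE+1)) * TE
  have ne2 : (EE+1)*(EE+1) ≠ 0 := mul_ne_zero EEadd_ne EEadd_ne
  exact mul_right_cancel₀ ne2 key

lemma leib : hPS * ((PowerSeries.derivative ℚ) tanhPS) + tanhPS * ((PowerSeries.derivative ℚ) hPS) = 1 := by
  have h := congrArg (PowerSeries.derivative ℚ) hT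
  rw [Derivation.leibniz, PowerSeries.derivative_X] at h
  simpa [smul_eq_mul] using h

lemma key (e : ℕ) : PowerSeries.coeff (R := ℚ) (e+1) (hPS^(e+2) * ((PowerSeries.derivative ℚ) tanhPS)) = 0 := by
  set c : PowerSeries ℚ := PowerSeries.C (R := ℚ) ((e:ℚ)+1) with hc
  have dpow : (PowerSeries.derivative ℚ) (hPS^(e+1)) = c * (hPS^e * (PowerSeries.derivative ℚ) hPS) := by
    rw [Derivation.leibniz_pow]
    simp only [Nat.add_sub_cancel, smul_smul, smul_eq_mul, nsmul_eq_mul]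
    rw [hc, map_add, map_natCast, map_one]
    push_cast
    ring
  have I : c * (hPS^(e+2) * (PowerSeries.derivative ℚ) tanhPS)
      = c * hPS^(e+1) - PowerSeries.X * ((PowerSeries.derivative ℚ) (hPS^(e+1))) := by
    rw [dpow]
    linear_combination (c * hPS^(e+1)) * leib - (c * hPS^e * (PowerSeries.derivative ℚ) hPS) * hT
  have hIc := congrArg (PowerSeries.coeff (R := ℚ) (e+1)) I
  rw [hc, map_sub, PowerSeries.coeff_C_mul, PowerSeries.coeff_C_mul,
    PowerSeries.coeff_succ_X_mul, PowerSeries.coeff_derivative] at hIc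
  have hne : ((e:ℚ)+1) ≠ 0 := by positivity
  refine mul_left_cancel₀ hne ?_
  rw [mul_zero]
  linear_combination hIc

lemma ck0 (k : ℕ) : PowerSeries.coeff (R := ℚ) (2*k) (hPS^(2*k+1)) = 1 := by
  induction k with
  | zero =>
    simp only [Nat.mul_zero, pow_one, hPS, PowerSeries.coeff_mk]
    norm_num
  | succ k ih =>
    have split : hPS^(2*(k+1)+1) = hPS^(2*k+1+2) * ((PowerSeries.derivative ℚ) tanhPS)
        + PowerSeries.X^2 * hPS^(2*k+1) := by
      rw [dT]
      have : 2*(k+1)+1 = (2*k+1)+2 := by ring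
      rw [this]
      linear_combination (hPS^(2*k+1)*(hPS*tanhPS + PowerSeries.X)) * hT
    rw [split, map_add, show 2*(k+1) = (2*k+1)+1 by ring, key (2*k+1),
      show (2*k+1)+1 = 2*k+2 by ring, PowerSeries.coeff_X_pow_mul]
    simpa using ih

lemma T0 : PowerSeries.constantCoeff (R := ℚ) tanhPS = 0 := by
  rw [← PowerSeries.coeff_zero_eq_constantCoeff]
  simp [tanhPS]

lemma gvanish (g : PowerSeries ℚ) (hg : g * (3 + tanhPS ^ 2) = tanhPS ^ 2)
    (k s : ℕ) (hks : k < s) :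
    PowerSeries.coeff (R := ℚ) (2*k) (g^s * hPS^(2*k+1)) = 0 := by
  have hXT : (PowerSeries.X : PowerSeries ℚ) ∣ tanhPS := by
    rw [PowerSeries.X_dvd_iff]; exact T0
  have hX2 : (PowerSeries.X : PowerSeries ℚ)^2 ∣ g * (3 + tanhPS ^ 2) := by
    rw [hg]; exact pow_dvd_pow_of_dvd hXT 2
  have hu : IsUnit (3 + tanhPS ^ 2) := by
    rw [PowerSeries.isUnit_iff_constantCoeff]
    rw [map_add, map_pow, T0, map_ofNat]
    norm_num
  have hX2g : (PowerSeries.X : PowerSeries ℚ)^2 ∣ g := (hu.dvd_mul_right).1 hX2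
  obtain ⟨w, hw⟩ := hX2g
  rw [hw]
  rw [mul_pow, ← pow_mul]
  rw [mul_assoc, PowerSeries.coeff_X_pow_mul']
  rw [if_neg (by omega)]

lemma recc (g : PowerSeries ℚ) (hg : g * (3 + tanhPS ^ 2) = tanhPS ^ 2) (k s : ℕ) :
    (3:ℚ) * PowerSeries.coeff (R := ℚ) (2*(k+1)) (g^(s+1) * hPS^(2*(k+1)+1)) =
      PowerSeries.coeff (R := ℚ) (2*k) (g^s * hPS^(2*k+1)) -
      PowerSeries.coeff (R := ℚ) (2*k) (g^(s+1) * hPS^(2*k+1)) := by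
  have I : (3:ℚ) • (g^(s+1) * hPS^(2*(k+1)+1)) =
      PowerSeries.X^2 * (g^s * hPS^(2*k+1)) - PowerSeries.X^2 * (g^(s+1) * hPS^(2*k+1)) := by
    rw [PowerSeries.smul_eq_C_mul, show (PowerSeries.C (R := ℚ)) 3 = (3:PowerSeries ℚ) by
      simp [PowerSeries.C_eq_algebraMap, map_ofNat]]
    linear_combination (g^s * hPS^(2*k+1) * hPS^2) * hg +
      (g^s * hPS^(2*k+1) * (1-g) * (hPS*tanhPS + PowerSeries.X)) * hT
  have := congrArg (PowerSeries.coeff (R := ℚ) (2*(k+1))) I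
  rw [map_smul, map_sub, show 2*(k+1) = 2*k+2 by ring, PowerSeries.coeff_X_pow_mul,
    PowerSeries.coeff_X_pow_mul] at this
  rw [show 2*(k+1) = 2*k+2 by ring]
  simpa [smul_eq_mul] using this

noncomputable def AA (m s : ℕ) : ℚ :=
  ∑ i ∈ Finset.range s, ((m + i).choose i : ℚ) * 3 ^ (s - 1 - i) * 4 ^ i

lemma pascalA (m s : ℕ) : AA (m+1) (s+1) = 4 * AA (m+1) s + AA m (s+1) := by
  unfold AA
  rw [Finset.sum_range_succ' (fun i => ((m + 1 + i).choose i : ℚ) * 3 ^ (s + 1 - 1 - i) * 4 ^ i),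
      Finset.sum_range_succ' (fun i => ((m + i).choose i : ℚ) * 3 ^ (s + 1 - 1 - i) * 4 ^ i),
      Finset.mul_sum]
  have hterm : ∀ i ∈ Finset.range s,
      ((m + 1 + (i+1)).choose (i+1) : ℚ) * 3 ^ (s + 1 - 1 - (i+1)) * 4 ^ (i+1)
      = 4 * (((m + 1 + i).choose i : ℚ) * 3 ^ (s - 1 - i) * 4 ^ i)
        + ((m + (i+1)).choose (i+1) : ℚ) * 3 ^ (s + 1 - 1 - (i+1)) * 4 ^ (i+1) := by
    intro i hi
    have e1 : s + 1 - 1 - (i+1) = s - 1 - i := by omega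
    have e2 : m + 1 + (i + 1) = (m + 1 + i) + 1 := by omega
    have e3 : m + (i + 1) = (m + i) + 1 := by omega
    rw [e1, e2, e3, Nat.choose_succ_succ (m+1+i) i,
      show (m + i) + 1 = (m + 1 + i) by omega]
    push_cast
    ring
  rw [Finset.sum_congr rfl hterm, Finset.sum_add_distrib]
  simp only [Nat.choose_zero_right, Nat.cast_one, pow_zero]
  ring

lemma geomA (s : ℕ) : AA 0 s = 4 ^ s - 3 ^ s := by
  induction s with
  | zero => simp [AA]
  | succ s ih =>
    have step : AA 0 (s+1) = 3 * AA 0 s + 4 ^ s := by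
      unfold AA
      rw [Finset.sum_range_succ, Finset.mul_sum]
      simp only [Nat.zero_add, Nat.choose_self, Nat.cast_one, one_mul]
      rw [Nat.add_sub_cancel, Nat.sub_self, pow_zero, one_mul]
      congr 1
      apply Finset.sum_congr rfl
      intro i hi
      have hi' := Finset.mem_range.1 hi
      rw [show s - i = (s - 1 - i) + 1 by omega, pow_succ]
      ring
    rw [step, ih]; ring

noncomputable def FF (k s : ℕ) : ℚ :=
  (1 / (4 ^ s * 3 ^ k)) * (3 ^ k + (-1 : ℚ) ^ (k - s) * AA (k - s) s)

lemma FF0 (k : ℕ) : FF k 0 = 1 := by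
  have : (3:ℚ)^k ≠ 0 := by positivity
  simp [FF, AA]

lemma alg1 (t u : ℕ) : (3:ℚ) * FF (t+1+u+1) (t+1) = FF (t+1+u) t - FF (t+1+u) (t+1) := by
  unfold FF
  rw [show t+1+u+1 - (t+1) = u+1 by omega, show t+1+u - t = u+1 by omega,
    show t+1+u - (t+1) = u by omega, pascalA u t]
  have h3 : (3:ℚ)^(t+1+u+1) ≠ 0 := by positivity
  have h3' : (3:ℚ)^(t+1+u) ≠ 0 := by positivity
  have h4 : (4:ℚ)^(t+1) ≠ 0 := by positivity
  have h4' : (4:ℚ)^t ≠ 0 := by positivity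
  field_simp
  ring

lemma alg2 (t : ℕ) : (3:ℚ) * FF (t+1) (t+1) = FF t t := by
  unfold FF
  rw [Nat.sub_self, Nat.sub_self, geomA, geomA]
  have h3 : (3:ℚ)^(t+1) ≠ 0 := by positivity
  have h3' : (3:ℚ)^t ≠ 0 := by positivity
  have h4 : (4:ℚ)^(t+1) ≠ 0 := by positivity
  have h4' : (4:ℚ)^t ≠ 0 := by positivity
  field_simp
  ring

lemma main_aux (g : PowerSeries ℚ) (hg : g * (3 + tanhPS ^ 2) = tanhPS ^ 2) :
    ∀ k s : ℕ, 1 ≤ s → s ≤ k →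
      PowerSeries.coeff (R := ℚ) (2*k) (g^s * hPS^(2*k+1)) = FF k s := by
  intro k
  induction k with
  | zero => intro s h1 h2; omega
  | succ k IH =>
    intro s h1 h2
    obtain ⟨t, rfl⟩ : ∃ t, s = t + 1 := ⟨s - 1, by omega⟩
    have hrec := recc g hg k t
    have hfirst : PowerSeries.coeff (R := ℚ) (2*k) (g^t * hPS^(2*k+1)) = FF k t := by
      rcases Nat.eq_zero_or_pos t with rfl | hp
      · rw [pow_zero, one_mul, ck0, FF0]
      · exact IH t hp (by omega)
    by_cases hcase : t + 1 ≤ k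
    · have hsecond := IH (t+1) (by omega) hcase
      obtain ⟨u, rfl⟩ : ∃ u, k = t + 1 + u := ⟨k - (t+1), by omega⟩
      have halg := alg1 t u
      rw [hfirst, hsecond] at hrec
      linarith [hrec, halg]
    · have ht : t = k := by omega
      subst ht
      have hsecond := gvanish g hg t (t+1) (by omega)
      rw [hfirst, hsecond] at hrec
      have halg := alg2 t
      linarith [hrec, halg]


end Aux

theorem stmt17 (k s : ℕ) (hk : 1 ≤ k) (hs : 1 ≤ s) (hsk : s ≤ k)
    (g : PowerSeries ℚ) (hg : g * (3 + tanhPS ^ 2) = tanhPS ^ 2) :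
    PowerSeries.coeff (R := ℚ) (2 * k) (g ^ s * hPS ^ (2 * k + 1)) =
      (1 / (4 ^ s * 3 ^ k)) *
        (3 ^ k + (-1 : ℚ) ^ (k - s) *
          ∑ i ∈ Finset.range s, ((k - s + i).choose i : ℚ) * 3 ^ (s - 1 - i) * 4 ^ i) := by
  rw [main_aux g hg k s hs hsk]
  rfl
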